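/- arXiv:1212.4266 — 6 statements merged into one kernel-verified Lean document; each statement's English description precedes it below -/
import Mathlib

section
/- Let X be a real Banach space, let A, B : X ⇉ X* be monotone operators with dom A ∩ dom B ≠ ∅, let C := {(x, x) : x ∈ X} ⊆ X × X be the diagonal, and let T : X × X ⇉ X* × X* be defined by T(x, y) := A x × B y. Then A + B is maximally monotone if and only if T + N_C is maximally monotone. -/
open Set Pointwise

variable {X : Type*} [NormedAddCommGroup X] [NormedSpace ℝ X] [CompleteSpace X]

/-- The graph of a set-valued operator from `X` to its continuous dual. -/
def graphOf (A : X → Set (X →L[ℝ] ℝ)) : Set (X × (X →L[ℝ] ℝ)) := {p | p.2 ∈ A p.1}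

/-- The domain of a set-valued operator. -/
def domOf (A : X → Set (X →L[ℝ] ℝ)) : Set X := {x | (A x).Nonempty}

/-- Monotonicity of a set-valued operator. -/
def IsMonotoneOp (A : X → Set (X →L[ℝ] ℝ)) : Prop :=
  ∀ ⦃x y : X⦄ ⦃x' y' : X →L[ℝ] ℝ⦄, x' ∈ A x → y' ∈ A y → 0 ≤ (x' - y') (x - y)

/-- Maximal monotonicity: monotone and no proper monotone extension of the graph. -/
def IsMaxMonotoneOp (A : X → Set (X →L[ℝ] ℝ)) : Prop :=
  IsMonotoneOp A ∧ ∀ B : X → Set (X →L[ℝ] ℝ), IsMonotoneOp B →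
    graphOf A ⊆ graphOf B → graphOf B = graphOf A

/-- A linear relation: the graph is a linear subspace of `X × X*`. -/
def IsLinearRelationOp (A : X → Set (X →L[ℝ] ℝ)) : Prop :=
  ∃ S : Submodule ℝ (X × (X →L[ℝ] ℝ)), (S : Set (X × (X →L[ℝ] ℝ))) = graphOf A

/-- The pointwise (Minkowski) sum of two set-valued operators. -/
def opSum (A B : X → Set (X →L[ℝ] ℝ)) : X → Set (X →L[ℝ] ℝ) :=
  fun x => {s | ∃ a ∈ A x, ∃ b ∈ B x, s = a + b}

/-- The duality pairing on `(X × X) × (X* × X*)`: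
`⟨(x, y), (x*, y*)⟩ = ⟨x, x*⟩ + ⟨y, y*⟩`. -/
def pair2 (v : X × X) (w : (X →L[ℝ] ℝ) × (X →L[ℝ] ℝ)) : ℝ := w.1 v.1 + w.2 v.2

/-- The graph of a set-valued operator from `X × X` to `X* × X*`. -/
def graphOf2 (T : X × X → Set ((X →L[ℝ] ℝ) × (X →L[ℝ] ℝ))) :
    Set ((X × X) × ((X →L[ℝ] ℝ) × (X →L[ℝ] ℝ))) := {p | p.2 ∈ T p.1}

/-- Monotonicity of a set-valued operator on the product space. -/
def IsMonotoneOp2 (T : X × X → Set ((X →L[ℝ] ℝ) × (X →L[ℝ] ℝ))) : Prop :=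
  ∀ ⦃u v : X × X⦄ ⦃u' v' : (X →L[ℝ] ℝ) × (X →L[ℝ] ℝ)⦄,
    u' ∈ T u → v' ∈ T v → 0 ≤ pair2 (u - v) (u' - v')

/-- Maximal monotonicity on the product space. -/
def IsMaxMonotoneOp2 (T : X × X → Set ((X →L[ℝ] ℝ) × (X →L[ℝ] ℝ))) : Prop :=
  IsMonotoneOp2 T ∧ ∀ S : X × X → Set ((X →L[ℝ] ℝ) × (X →L[ℝ] ℝ)), IsMonotoneOp2 S →
    graphOf2 T ⊆ graphOf2 S → graphOf2 S = graphOf2 T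

/-- The pointwise (Minkowski) sum of two set-valued operators on the product space. -/
def opSum2 (S T : X × X → Set ((X →L[ℝ] ℝ) × (X →L[ℝ] ℝ))) :
    X × X → Set ((X →L[ℝ] ℝ) × (X →L[ℝ] ℝ)) :=
  fun w => {s | ∃ a ∈ S w, ∃ b ∈ T w, s = a + b}

/-- The normal cone operator of a set `C ⊆ X × X` (empty value outside `C`). -/
def normalConeOp2 (C : Set (X × X)) (w : X × X) : Set ((X →L[ℝ] ℝ) × (X →L[ℝ] ℝ)) :=
  {w' | w ∈ C ∧ ∀ v ∈ C, pair2 (v - w) w' ≤ 0}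


private lemma real_zero_of_forall (c s : ℝ) (h : ∀ t : ℝ, 0 ≤ c + t * s) : s = 0 := by
  by_contra hs
  have := h (-(c + 1) / s)
  rw [div_mul_cancel₀ _ hs] at this
  linarith

/-- For monotone `A, B` with `dom A ∩ dom B ≠ ∅`, the diagonal `C` and
`T (x, y) := A x × B y`, the sum `A + B` is maximally monotone iff `T + N_C` is. -/
theorem stmt4 (A B : X → Set (X →L[ℝ] ℝ))
    (hA : IsMonotoneOp A) (hB : IsMonotoneOp B)
    (hdom : (domOf A ∩ domOf B).Nonempty)
    (C : Set (X × X)) (hC : C = {p : X × X | p.1 = p.2})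
    (T : X × X → Set ((X →L[ℝ] ℝ) × (X →L[ℝ] ℝ)))
    (hT : T = fun p => (A p.1) ×ˢ (B p.2)) :
    IsMaxMonotoneOp (opSum A B) ↔ IsMaxMonotoneOp2 (opSum2 T (normalConeOp2 C)) := by
  subst hC hT
  -- characterize the normal cone of the diagonal
  have hNC : ∀ (x y : X) (u v : X →L[ℝ] ℝ),
      (u, v) ∈ normalConeOp2 {p : X × X | p.1 = p.2} (x, y) ↔ x = y ∧ u + v = 0 := by
    intro x y u v
    constructor
    · rintro ⟨hxy, hcone⟩
      refine ⟨hxy, ?_⟩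
      have hxy' : x = y := hxy
      ext w
      have h1 := hcone (x + w, y + w) (by simp [hxy'])
      have h2 := hcone (x - w, y - w) (by simp [hxy'])
      simp only [pair2, Prod.fst_sub, Prod.snd_sub] at h1 h2
      simp only [add_sub_cancel_left, sub_sub_cancel_left, map_neg] at h1 h2
      simp only [ContinuousLinearMap.add_apply, ContinuousLinearMap.zero_apply]
      linarith
    · rintro ⟨hxy, huv⟩
      refine ⟨hxy, ?_⟩
      rintro ⟨v1, v2⟩ hv
      have hv' : v1 = v2 := hv
      simp only [pair2, Prod.fst_sub, Prod.snd_sub, map_sub]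
      have : u v2 + v v2 = 0 := by
        have := congrArg (fun f : X →L[ℝ] ℝ => f v2) huv; simpa using this
      have hxy' : x = y := hxy
      have : u y + v y = 0 := by
        have := congrArg (fun f : X →L[ℝ] ℝ => f y) huv; simpa using this
      subst hxy' hv'
      have h2 : u v1 + v v1 = 0 := by
        have := congrArg (fun f : X →L[ℝ] ℝ => f v1) huv; simpa using this
      linarith
  set T2 : X × X → Set ((X →L[ℝ] ℝ) × (X →L[ℝ] ℝ)) :=
    opSum2 (fun p => (A p.1) ×ˢ (B p.2)) (normalConeOp2 {p : X × X | p.1 = p.2}) with hT2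
  -- characterize the graph of T + N_C
  have hmem : ∀ (x y : X) (p q : X →L[ℝ] ℝ),
      (p, q) ∈ T2 (x, y) ↔ x = y ∧ p + q ∈ opSum A B x := by
    intro x y p q
    constructor
    · rintro ⟨⟨a1, a2⟩, ⟨ha1, ha2⟩, ⟨b1, b2⟩, hb, hpq⟩
      obtain ⟨hxy, hb0⟩ := (hNC x y b1 b2).mp hb
      subst hxy
      refine ⟨rfl, ?_⟩
      refine ⟨a1, ha1, a2, ha2, ?_⟩
      have h1 : p = a1 + b1 := congrArg Prod.fst hpq
      have h2 : q = a2 + b2 := congrArg Prod.snd hpq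
      rw [h1, h2]
      have : b1 + b2 = 0 := hb0
      rw [add_add_add_comm, this, add_zero]
    · rintro ⟨hxy, a, ha, b, hb, hab⟩
      subst hxy
      refine ⟨(a, b), ⟨ha, hb⟩, (p - a, q - b), ?_, by simp⟩
      refine (hNC x x (p - a) (q - b)).mpr ⟨rfl, ?_⟩
      have : p + q = a + b := hab
      rw [sub_add_sub_comm, this, sub_self]
  -- A + B is monotone
  have hmonAB : IsMonotoneOp (opSum A B) := by
    rintro x y x' y' ⟨a, ha, b, hb, hx'⟩ ⟨a', ha', b', hb', hy'⟩
    have h1 := hA ha ha'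
    have h2 := hB hb hb'
    subst hx' hy'
    have : ((a + b) - (a' + b')) (x - y) = (a - a') (x - y) + (b - b') (x - y) := by
      simp only [ContinuousLinearMap.sub_apply, ContinuousLinearMap.add_apply]; ring
    rw [this]; linarith
  -- T + N_C is monotone
  have hmon2 : IsMonotoneOp2 T2 := by
    rintro ⟨x1, x2⟩ ⟨y1, y2⟩ ⟨p, q⟩ ⟨p', q'⟩ hu hv
    obtain ⟨hx, hpq⟩ := (hmem x1 x2 p q).mp hu
    obtain ⟨hy, hpq'⟩ := (hmem y1 y2 p' q').mp hv
    subst hx hy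
    have := hmonAB hpq hpq'
    simp only [pair2, Prod.fst_sub, Prod.snd_sub, ContinuousLinearMap.sub_apply,
      ContinuousLinearMap.add_apply] at this ⊢
    linarith
  constructor
  · rintro ⟨-, hmax⟩
    refine ⟨hmon2, ?_⟩
    intro S2 hS2 hsub
    apply Set.Subset.antisymm _ hsub
    rintro ⟨⟨x, y⟩, ⟨p, q⟩⟩ hmemS2
    -- first step: x = y
    obtain ⟨z, ⟨a, ha⟩, ⟨b, hb⟩⟩ := hdom
    have hxy : x = y := by
      have hforall : ∀ u : X →L[ℝ] ℝ,
          0 ≤ pair2 ((x, y) - (z, z)) ((p, q) - (a + u, b - u)) := by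
        intro u
        have hg : ((z, z), (a + u, b - u)) ∈ graphOf2 S2 :=
          hsub ((hmem z z (a + u) (b - u)).mpr ⟨rfl, a, ha, b, hb, by rw [add_add_sub_cancel]⟩)
        exact hS2 hmemS2 (by exact hg)
      have key : ∀ u : X →L[ℝ] ℝ, u (y - x) = 0 := by
        intro u
        have h2 : ∀ t : ℝ, 0 ≤ ((p - a) (x - z) + (q - b) (y - z)) + t * (u (y - x)) := by
          intro t
          have := hforall (t • u)
          simp only [pair2, Prod.fst_sub, Prod.snd_sub, ContinuousLinearMap.sub_apply,
            ContinuousLinearMap.add_apply, ContinuousLinearMap.smul_apply, map_sub,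
            smul_eq_mul] at this ⊢
          nlinarith [this]
        exact real_zero_of_forall _ _ h2
      have : y - x = 0 := NormedSpace.eq_zero_of_forall_dual_eq_zero ℝ key
      exact (sub_eq_zero.mp this).symm
    subst hxy
    -- second step: p + q ∈ opSum A B x via maximality of A + B
    set S1 : X → Set (X →L[ℝ] ℝ) :=
      fun z => {r | ∃ p q : X →L[ℝ] ℝ, p + q = r ∧ ((z, z), (p, q)) ∈ graphOf2 S2} with hS1
    have hS1mon : IsMonotoneOp S1 := by
      rintro z w r r' ⟨p1, q1, hr, hg⟩ ⟨p2, q2, hr', hg'⟩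
      have := hS2 hg hg'
      simp only [pair2, Prod.fst_sub, Prod.snd_sub, ContinuousLinearMap.sub_apply] at this
      subst hr hr'
      simp only [ContinuousLinearMap.sub_apply, ContinuousLinearMap.add_apply]
      linarith
    have hS1ext : graphOf (opSum A B) ⊆ graphOf S1 := by
      rintro ⟨z, r⟩ hr
      exact ⟨r, 0, add_zero r, hsub ((hmem z z r 0).mpr ⟨rfl, by simpa using (show r ∈ opSum A B z from hr)⟩)⟩
    have hgr := hmax S1 hS1mon hS1ext
    have : p + q ∈ S1 x := ⟨p, q, rfl, hmemS2⟩
    have hpq : p + q ∈ opSum A B x := by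
      have : ((x : X), p + q) ∈ graphOf S1 := this
      rw [hgr] at this
      exact this
    exact (hmem x x p q).mpr ⟨rfl, hpq⟩
  · rintro ⟨-, hmax2⟩
    refine ⟨hmonAB, ?_⟩
    intro S1 hS1 hsub
    set S2 : X × X → Set ((X →L[ℝ] ℝ) × (X →L[ℝ] ℝ)) :=
      fun w => {s | w.1 = w.2 ∧ s.1 + s.2 ∈ S1 w.1} with hS2def
    have hS2mon : IsMonotoneOp2 S2 := by
      rintro ⟨x1, x2⟩ ⟨y1, y2⟩ ⟨p, q⟩ ⟨p', q'⟩ ⟨hx, hp⟩ ⟨hy, hp'⟩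
      dsimp only at hx hy hp hp'
      subst hx hy
      have := hS1 hp hp'
      simp only [pair2, Prod.fst_sub, Prod.snd_sub, ContinuousLinearMap.sub_apply,
        ContinuousLinearMap.add_apply] at this ⊢
      linarith
    have hext : graphOf2 T2 ⊆ graphOf2 S2 := by
      rintro ⟨⟨x, y⟩, ⟨p, q⟩⟩ hg
      obtain ⟨hxy, hpq⟩ := (hmem x y p q).mp hg
      exact ⟨hxy, by exact hsub (show ((x : X), p + q) ∈ graphOf (opSum A B) from hpq)⟩
    have hgr := hmax2 S2 hS2mon hext
    apply Set.Subset.antisymm _ hsub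
    rintro ⟨x, r⟩ hr
    have : ((x, x), (r, (0 : X →L[ℝ] ℝ))) ∈ graphOf2 S2 := ⟨rfl, by simpa using (show r ∈ S1 x from hr)⟩
    rw [hgr] at this
    obtain ⟨-, hpq⟩ := (hmem x x r 0).mp this
    exact (by simpa using hpq : r ∈ opSum A B x)
end

section
/- Let X be a real Banach space, let A, B : X ⇉ X* be monotone operators with dom A ∩ dom B ≠ ∅, let C := {(x, x) : x ∈ X} ⊆ X × X be the diagonal, and let T : X × X ⇉ X* × X* be defined by T(x, y) := A x × B y. If A + B is maximally monotone, then T + N_C is maximally monotone. -/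
open Set Pointwise

variable {X : Type*} [NormedAddCommGroup X] [NormedSpace ℝ X] [CompleteSpace X]

/-- For monotone `A, B` with `dom A ∩ dom B ≠ ∅`, the diagonal `C` and
`T (x, y) := A x × B y`: if `A + B` is maximally monotone, then so is `T + N_C`. -/
theorem stmt5 (A B : X → Set (X →L[ℝ] ℝ))
    (hA : IsMonotoneOp A) (hB : IsMonotoneOp B)
    (hdom : (domOf A ∩ domOf B).Nonempty)
    (C : Set (X × X)) (hC : C = {p : X × X | p.1 = p.2})
    (T : X × X → Set ((X →L[ℝ] ℝ) × (X →L[ℝ] ℝ)))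
    (hT : T = fun p => (A p.1) ×ˢ (B p.2))
    (hsum : IsMaxMonotoneOp (opSum A B)) :
    IsMaxMonotoneOp2 (opSum2 T (normalConeOp2 C)) := by
  subst hC hT
  obtain ⟨x0, hx0A, hx0B⟩ := hdom
  obtain ⟨a0, ha0⟩ := hx0A
  obtain ⟨b0, hb0⟩ := hx0B
  obtain ⟨hABmono, hABmax⟩ := hsum
  -- key characterization of membership in T + N_C
  have key : ∀ (w : X × X) (s : (X →L[ℝ] ℝ) × (X →L[ℝ] ℝ)),
      s ∈ opSum2 (fun p => (A p.1) ×ˢ (B p.2))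
        (normalConeOp2 {p : X × X | p.1 = p.2}) w ↔
      w.1 = w.2 ∧ s.1 + s.2 ∈ opSum A B w.1 := by
    rintro ⟨x, y⟩ ⟨p, q⟩
    constructor
    · rintro ⟨a, ha, b, hb, hs⟩
      obtain ⟨hxy, hbn⟩ := hb
      simp only [Set.mem_setOf_eq] at hxy
      dsimp only at hxy ⊢
      subst hxy
      rw [Set.mem_prod] at ha
      have hbsum : b.1 + b.2 = 0 := by
        ext w
        have h1 := hbn (x + w, x + w) (by simp [Set.mem_setOf_eq])
        have h2 := hbn (x - w, x - w) (by simp [Set.mem_setOf_eq])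
        simp only [pair2, Prod.fst_sub, Prod.snd_sub, add_sub_cancel_left,
          sub_sub_cancel_left, map_neg] at h1 h2
        simp only [ContinuousLinearMap.add_apply, ContinuousLinearMap.zero_apply]
        linarith
      have hp : p = a.1 + b.1 := congrArg Prod.fst hs
      have hq : q = a.2 + b.2 := congrArg Prod.snd hs
      refine ⟨rfl, ?_⟩
      have hpq : p + q = a.1 + a.2 := by
        rw [hp, hq]
        have : a.1 + b.1 + (a.2 + b.2) = a.1 + a.2 + (b.1 + b.2) := by abel
        rw [this, hbsum, add_zero]
      rw [hpq]
      exact ⟨a.1, ha.1, a.2, ha.2, rfl⟩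
    · rintro ⟨hxy, a, haA, b, hbB, hpq⟩
      dsimp only at hxy
      subst hxy
      refine ⟨(a, b), Set.mem_prod.mpr ⟨haA, hbB⟩, (p - a, q - b), ⟨rfl, ?_⟩, ?_⟩
      · rintro ⟨v1, v2⟩ hv
        simp only [Set.mem_setOf_eq] at hv
        subst hv
        have h0 : (p - a) + (q - b) = 0 := by rw [sub_add_sub_comm, hpq, sub_self]
        simp only [pair2, Prod.fst_sub, Prod.snd_sub]
        have : (p - a) (v1 - x) + (q - b) (v1 - x) = ((p - a) + (q - b)) (v1 - x) := by
          rw [ContinuousLinearMap.add_apply]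
        rw [this, h0]
        simp
      · ext <;> simp <;> abel
  -- monotonicity of T + N_C
  have hmono2 : IsMonotoneOp2 (opSum2 (fun p => (A p.1) ×ˢ (B p.2))
      (normalConeOp2 {p : X × X | p.1 = p.2})) := by
    intro u v u' v' hu hv
    obtain ⟨hu1, hu2⟩ := (key u u').mp hu
    obtain ⟨hv1, hv2⟩ := (key v v').mp hv
    have h := hABmono hu2 hv2
    simp only [ContinuousLinearMap.sub_apply, ContinuousLinearMap.add_apply] at h
    simp only [pair2, Prod.fst_sub, Prod.snd_sub, ContinuousLinearMap.sub_apply]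
    rw [← hu1, ← hv1]
    linarith
  refine ⟨hmono2, ?_⟩
  intro S hS hsub
  apply Set.Subset.antisymm _ hsub
  rintro ⟨⟨x, y⟩, ⟨p, q⟩⟩ hmem
  have hmemS : (p, q) ∈ S (x, y) := hmem
  -- step 1: x = y
  have hxy : x = y := by
    by_contra hne
    obtain ⟨g, hg1, hg2⟩ := exists_dual_vector ℝ (x - y) (norm_ne_zero_iff.mpr (sub_ne_zero.mpr hne))
    have hnorm : (0:ℝ) < ‖x - y‖ := norm_pos_iff.mpr (sub_ne_zero.mpr hne)
    set c : ℝ := (p - a0) (x - x0) + (q - b0) (y - x0) with hc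
    have hineq : ∀ t : ℝ, 0 ≤ c + t * (g y - g x) := by
      intro t
      have hmemt : ((x0, x0), (a0 + t • g, b0 - t • g)) ∈ graphOf2 S := by
        apply hsub
        have hm : (a0 + t • g, b0 - t • g) ∈ opSum2 (fun p => (A p.1) ×ˢ (B p.2))
            (normalConeOp2 {p : X × X | p.1 = p.2}) (x0, x0) := by
          rw [key]
          refine ⟨rfl, ?_⟩
          have : (a0 + t • g) + (b0 - t • g) = a0 + b0 := by abel
          rw [this]
          exact ⟨a0, ha0, b0, hb0, rfl⟩
        exact hm
      have h := hS hmemS hmemt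
      simp only [pair2, Prod.fst_sub, Prod.snd_sub, ContinuousLinearMap.sub_apply,
        ContinuousLinearMap.add_apply, ContinuousLinearMap.smul_apply, smul_eq_mul,
        map_sub] at h
      simp only [hc, ContinuousLinearMap.sub_apply, map_sub]
      nlinarith [h]
    have hd : g y - g x = -‖x - y‖ := by
      have h2 : g x - g y = ‖x - y‖ := by
        rw [← map_sub, hg2]
        simp
      linarith
    have := hineq ((c + 1) / ‖x - y‖)
    rw [hd] at this
    have hmul : (c + 1) / ‖x - y‖ * -‖x - y‖ = -(c + 1) := by
      field_simp
    rw [hmul] at this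
    linarith
  subst hxy
  -- step 2: use maximality of A + B
  set Sd : X → Set (X →L[ℝ] ℝ) :=
    fun z => {r | ∃ s : (X →L[ℝ] ℝ) × (X →L[ℝ] ℝ), s.1 + s.2 = r ∧ s ∈ S (z, z)} with hSd
  have hSdmono : IsMonotoneOp Sd := by
    intro z w r r' hr hr'
    obtain ⟨s, hs1, hs2⟩ := hr
    obtain ⟨s', hs'1, hs'2⟩ := hr'
    have h := hS hs2 hs'2
    simp only [pair2, Prod.fst_sub, Prod.snd_sub, ContinuousLinearMap.sub_apply] at h
    simp only [ContinuousLinearMap.sub_apply, ← hs1, ← hs'1,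
      ContinuousLinearMap.add_apply]
    linarith
  have hsubSd : graphOf (opSum A B) ⊆ graphOf Sd := by
    rintro ⟨z, r⟩ hr
    obtain ⟨a, haA, b, hbB, hrab⟩ := hr
    refine ⟨(a, b), hrab.symm, ?_⟩
    have hm : ((a, b) : (X →L[ℝ] ℝ) × (X →L[ℝ] ℝ)) ∈ opSum2 (fun p => (A p.1) ×ˢ (B p.2))
        (normalConeOp2 {p : X × X | p.1 = p.2}) ((z, r).1, (z, r).1) := by
      rw [key]
      exact ⟨rfl, a, haA, b, hbB, rfl⟩
    have hm2 : (((z, r).1, (z, r).1), ((a, b) : (X →L[ℝ] ℝ) × (X →L[ℝ] ℝ))) ∈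
        graphOf2 (opSum2 (fun p => (A p.1) ×ˢ (B p.2))
          (normalConeOp2 {p : X × X | p.1 = p.2})) := hm
    exact hsub hm2
  have hSdeq := hABmax Sd hSdmono hsubSd
  have hpqmem : p + q ∈ opSum A B x := by
    have : (x, p + q) ∈ graphOf Sd := ⟨(p, q), rfl, hmemS⟩
    rw [hSdeq] at this
    exact this
  have hm : ((p, q) : (X →L[ℝ] ℝ) × (X →L[ℝ] ℝ)) ∈ opSum2 (fun p => (A p.1) ×ˢ (B p.2))
      (normalConeOp2 {p : X × X | p.1 = p.2}) (x, x) := by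
    rw [key]
    exact ⟨rfl, hpqmem⟩
  exact hm
end

section
/- Let X be a real Banach space, let A, B : X ⇉ X* be monotone operators with dom A ∩ dom B ≠ ∅, let C := {(x, x) : x ∈ X} ⊆ X × X be the diagonal, and let T : X × X ⇉ X* × X* be defined by T(x, y) := A x × B y. If T + N_C is maximally monotone, then A + B is maximally monotone. -/
open Set Pointwise

variable {X : Type*} [NormedAddCommGroup X] [NormedSpace ℝ X] [CompleteSpace X]

lemma diag_ncone {x : X} {n : (X →L[ℝ] ℝ) × (X →L[ℝ] ℝ)}
    (hn : n ∈ normalConeOp2 {p : X × X | p.1 = p.2} (x, x)) :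
    n.2 = -n.1 := by
  have key : ∀ u : X, n.1 u + n.2 u ≤ 0 := by
    intro u
    have h := hn.2 (x + u, x + u) rfl
    simpa [pair2, add_sub_cancel_left] using h
  ext u
  have h1 := key u
  have h2 := key (-u)
  simp only [map_neg] at h2
  simp only [ContinuousLinearMap.neg_apply]
  linarith

/-- For monotone `A, B` with `dom A ∩ dom B ≠ ∅`, the diagonal `C` and
`T (x, y) := A x × B y`: if `T + N_C` is maximally monotone, then so is `A + B`. -/
theorem stmt6 (A B : X → Set (X →L[ℝ] ℝ))
    (hA : IsMonotoneOp A) (hB : IsMonotoneOp B)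
    (hdom : (domOf A ∩ domOf B).Nonempty)
    (C : Set (X × X)) (hC : C = {p : X × X | p.1 = p.2})
    (T : X × X → Set ((X →L[ℝ] ℝ) × (X →L[ℝ] ℝ)))
    (hT : T = fun p => (A p.1) ×ˢ (B p.2))
    (hTN : IsMaxMonotoneOp2 (opSum2 T (normalConeOp2 C))) :
    IsMaxMonotoneOp (opSum A B) := by
  subst hC hT
  constructor
  · rintro x y s t ⟨a, ha, b, hb, rfl⟩ ⟨c, hc, d, hd, rfl⟩
    have h1 := hA ha hc
    have h2 := hB hb hd
    simp only [ContinuousLinearMap.sub_apply, ContinuousLinearMap.add_apply] at h1 h2 ⊢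
    linarith
  · intro S hS hsub
    refine Set.Subset.antisymm ?_ hsub
    rintro ⟨z, z'⟩ hz
    set N := normalConeOp2 {p : X × X | p.1 = p.2} with hN
    set T' := opSum2 (fun p : X × X => (A p.1) ×ˢ (B p.2)) N with hT'
    have hrel : ∀ ⦃x : X⦄ ⦃s : X →L[ℝ] ℝ⦄, s ∈ opSum A B x → 0 ≤ (z' - s) (z - x) := by
      intro x s hsx
      have h1 : ((x, s) : X × (X →L[ℝ] ℝ)) ∈ graphOf (opSum A B) := hsx
      have h2 := hsub h1
      simp only [graphOf, Set.mem_setOf_eq] at h2 hz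
      exact hS hz h2
    set S2 : X × X → Set ((X →L[ℝ] ℝ) × (X →L[ℝ] ℝ)) :=
      fun w => T' w ∪ {p | w = (z, z) ∧ p = (z', 0)} with hS2def
    have hS2 : IsMonotoneOp2 S2 := by
      rintro u v u' v' hu hv
      rcases hu with hu | ⟨rfl, rfl⟩ <;> rcases hv with hv | ⟨rfl, rfl⟩
      · exact hTN.1 hu hv
      · -- u' ∈ T' u, v = (z,z), v' = (z',0)
        obtain ⟨a, ha, n, hn, rfl⟩ := hu
        obtain ⟨x, y⟩ := u
        have hxy : x = y := hn.1
        subst hxy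
        have hneg : n.2 = -n.1 := diag_ncone hn
        have key := hrel ⟨a.1, ha.1, a.2, ha.2, rfl⟩
        simp only [pair2, Prod.mk_sub_mk, Prod.fst_sub, Prod.snd_sub, Prod.fst_add,
          Prod.snd_add, ContinuousLinearMap.sub_apply, ContinuousLinearMap.add_apply,
          ContinuousLinearMap.zero_apply, hneg, ContinuousLinearMap.neg_apply,
          ContinuousLinearMap.coe_zero, Pi.zero_apply, map_sub, map_neg] at key ⊢
        linarith
      · obtain ⟨a, ha, n, hn, rfl⟩ := hv
        obtain ⟨x, y⟩ := v
        have hxy : x = y := hn.1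
        subst hxy
        have hneg : n.2 = -n.1 := diag_ncone hn
        have key := hrel ⟨a.1, ha.1, a.2, ha.2, rfl⟩
        simp only [pair2, Prod.mk_sub_mk, Prod.fst_sub, Prod.snd_sub, Prod.fst_add,
          Prod.snd_add, ContinuousLinearMap.sub_apply, ContinuousLinearMap.add_apply,
          ContinuousLinearMap.zero_apply, hneg, ContinuousLinearMap.neg_apply,
          ContinuousLinearMap.coe_zero, Pi.zero_apply, map_sub, map_neg] at key ⊢
        linarith
      · simp [pair2]
    have hgsub : graphOf2 T' ⊆ graphOf2 S2 := fun p hp => Or.inl hp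
    have heq := hTN.2 S2 hS2 hgsub
    have hmem : ((z, z), (z', (0 : X →L[ℝ] ℝ))) ∈ graphOf2 S2 := Or.inr ⟨rfl, rfl⟩
    rw [heq] at hmem
    obtain ⟨a, ha, n, hn, hsum⟩ := hmem
    have hneg : n.2 = -n.1 := diag_ncone hn
    have h1 : z' = a.1 + n.1 := congrArg Prod.fst hsum
    have h2 : (0 : X →L[ℝ] ℝ) = a.2 + n.2 := congrArg Prod.snd hsum
    have hn1 : a.2 = n.1 := by
      have h3 := h2.symm
      rw [hneg, add_neg_eq_zero] at h3
      exact h3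
    exact ⟨a.1, ha.1, a.2, ha.2, by rw [hn1]; exact h1⟩
end

section
/- Let X be a real Banach space and let A, B : X ⇉ X* be maximally monotone operators with dom A ∩ int(dom B) ≠ ∅. Then ⋃_{λ>0} λ·(P_X(dom F_A) − P_X(dom F_B)) = X, where F_A and F_B are the Fitzpatrick functions of A and B, dom F denotes the set where F is finite, and P_X : X × X* → X is the projection (x, x*) ↦ x. -/
open Set Pointwise

variable {X : Type*} [NormedAddCommGroup X] [NormedSpace ℝ X] [CompleteSpace X]

/-- `(x, x*)` is monotonically related to the set `G ⊆ X × X*`. -/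
def MonRelTo (p : X × (X →L[ℝ] ℝ)) (G : Set (X × (X →L[ℝ] ℝ))) : Prop :=
  ∀ q ∈ G, 0 ≤ (p.2 - q.2) (p.1 - q.1)

/-- The normal cone operator of a set `C ⊆ X` (empty value outside `C`). -/
def normalConeOp (C : Set X) (x : X) : Set (X →L[ℝ] ℝ) :=
  {x' | x ∈ C ∧ ∀ c ∈ C, x' (c - x) ≤ 0}

/-- The Fitzpatrick function of a set-valued operator, with values in `(-∞, +∞]` (`EReal`). -/
noncomputable def fitz (A : X → Set (X →L[ℝ] ℝ)) : X × (X →L[ℝ] ℝ) → EReal :=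
  fun p => sSup ((fun q : X × (X →L[ℝ] ℝ) =>
    ((q.2 p.1 + p.2 q.1 - q.2 q.1 : ℝ) : EReal)) '' graphOf A)


lemma dom_subset_fitz_dom (A : X → Set (X →L[ℝ] ℝ)) (hA : IsMonotoneOp A) :
    domOf A ⊆ Prod.fst '' {p | fitz A p < ⊤} := by
  rintro x ⟨x', hx'⟩
  refine ⟨(x, x'), ?_, rfl⟩
  have hle : fitz A (x, x') ≤ ((x' x : ℝ) : EReal) := by
    apply sSup_le
    rintro v ⟨q, hq, rfl⟩
    have hm := hA hx' hq
    simp only [ContinuousLinearMap.sub_apply, map_sub] at hm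
    have : q.2 x + x' q.1 - q.2 q.1 ≤ x' x := by linarith
    simpa using EReal.coe_le_coe_iff.mpr this
  exact lt_of_le_of_lt hle (EReal.coe_lt_top _)

/-- If `A, B` are maximally monotone with `dom A ∩ int (dom B) ≠ ∅`, then
`⋃_{λ > 0} λ • (P_X (dom F_A) - P_X (dom F_B)) = X`. -/
theorem stmt9 (A B : X → Set (X →L[ℝ] ℝ))
    (hA : IsMaxMonotoneOp A) (hB : IsMaxMonotoneOp B)
    (hCQ : (domOf A ∩ interior (domOf B)).Nonempty) :
    ⋃ l ∈ Set.Ioi (0 : ℝ),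
      l • ((Prod.fst '' {p | fitz A p < ⊤}) - (Prod.fst '' {p | fitz B p < ⊤}))
      = (univ : Set X) := by
  obtain ⟨x0, hx0A, hx0B⟩ := hCQ
  have hSA : x0 ∈ Prod.fst '' {p | fitz A p < ⊤} := dom_subset_fitz_dom A hA.1 hx0A
  have hSB : interior (domOf B) ⊆ Prod.fst '' {p | fitz B p < ⊤} :=
    interior_subset.trans (dom_subset_fitz_dom B hB.1)
  obtain ⟨ε, hε, hball⟩ := Metric.isOpen_iff.mp isOpen_interior x0 hx0B
  ext x
  simp only [mem_iUnion, mem_univ, iff_true]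
  set t : ℝ := ε / (2 * (‖x‖ + 1)) with ht_def
  have hxpos : (0:ℝ) < ‖x‖ + 1 := by positivity
  have ht : 0 < t := by positivity
  have htx : ‖t • x‖ < ε := by
    rw [norm_smul, Real.norm_eq_abs, abs_of_pos ht]
    calc t * ‖x‖ < t * (‖x‖ + 1) := by nlinarith
      _ = ε / 2 := by rw [ht_def, div_mul_eq_mul_div, mul_div_mul_right _ _ hxpos.ne']
      _ < ε := by linarith
  have hu : x0 - t • x ∈ interior (domOf B) := by
    apply hball
    rw [Metric.mem_ball, dist_eq_norm]
    simpa using htx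
  refine ⟨t⁻¹, mem_Ioi.mpr (by positivity), ?_⟩
  rw [Set.mem_smul_set]
  refine ⟨t • x, ?_, by rw [smul_smul, inv_mul_cancel₀ ht.ne', one_smul]⟩
  rw [Set.mem_sub]
  exact ⟨x0, hSA, x0 - t • x, hSB hu, by abel⟩
end

section
/- Let X be a real Banach space, let A : X ⇉ X* be a maximally monotone linear relation, and let B : X ⇉ X* be a maximally monotone operator. If w ∈ closure(dom A) ∩ int(dom B), then the Fitzpatrick function of A + B satisfies F_{A+B}(w, w*) ≥ ⟨w, w*⟩ for every w* ∈ X*. -/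
open Set Pointwise
open Metric

variable {X : Type*} [NormedAddCommGroup X] [NormedSpace ℝ X] [CompleteSpace X]

/-- A monotone operator is locally bounded at interior points of its domain. -/
lemma monotone_locBdd (B : X → Set (X →L[ℝ] ℝ)) (hmono : IsMonotoneOp B)
    (w : X) (hw : w ∈ interior (domOf B)) :
    ∃ δ > 0, ∃ M : ℝ, ball w δ ⊆ domOf B ∧
      ∀ x ∈ ball w δ, ∀ b ∈ B x, ‖b‖ ≤ M := by
  obtain ⟨r₀, hr₀, hball₀⟩ := Metric.isOpen_iff.1 isOpen_interior w hw
  have hdom : ball w r₀ ⊆ domOf B := hball₀.trans interior_subset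
  set δ₀ : ℝ := r₀ / 4 with hδ₀def
  have hδ₀ : 0 < δ₀ := by positivity
  set K : Set X := closedBall w (2 * δ₀) with hKdef
  have hKsub : K ⊆ ball w r₀ := by
    intro x hx
    simp only [hKdef, mem_closedBall] at hx
    simp only [mem_ball]
    linarith
  have hKdom : K ⊆ domOf B := hKsub.trans hdom
  have hwK : w ∈ K := by
    simp only [hKdef, mem_closedBall, dist_self]; positivity
  -- the sets E n
  set E : ℕ → Set X := fun n =>
    {x | x ∈ K ∧ ∀ y ∈ K, ∀ u ∈ B y, u (x - y) ≤ (n : ℝ)} with hEdef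
  have hEclosed : ∀ n, IsClosed (E n) := by
    intro n
    have : E n = K ∩ ⋂ y, ⋂ (_ : y ∈ K), ⋂ u, ⋂ (_ : u ∈ B y),
        {x | u (x - y) ≤ (n : ℝ)} := by
      ext x
      simp only [hEdef, mem_setOf_eq, mem_inter_iff, mem_iInter]
    rw [this]
    refine (isClosed_closedBall).inter ?_
    refine isClosed_iInter fun y => isClosed_iInter fun _ =>
      isClosed_iInter fun u => isClosed_iInter fun _ => ?_
    have hcont : Continuous fun x : X => u (x - y) :=
      u.continuous.comp (continuous_id.sub continuous_const)
    exact isClosed_le hcont continuous_const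
  -- the sets cover K
  have hcover : ∀ x ∈ K, ∃ n : ℕ, x ∈ E n := by
    intro x hx
    obtain ⟨x', hx'⟩ := hKdom hx
    refine ⟨⌈‖x'‖ * (4 * δ₀)⌉₊, hx, fun y hy u hu => ?_⟩
    have hmon := hmono hx' hu
    simp only [ContinuousLinearMap.sub_apply] at hmon
    have h1 : u (x - y) ≤ x' (x - y) := by linarith
    have h2 : x' (x - y) ≤ ‖x'‖ * ‖x - y‖ := by
      have := x'.le_opNorm (x - y)
      have habs : x' (x - y) ≤ ‖x' (x - y)‖ := le_trans (le_abs_self _) (le_of_eq (Real.norm_eq_abs _).symm)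
      linarith
    have h3 : ‖x - y‖ ≤ 4 * δ₀ := by
      have hx2 : dist x w ≤ 2 * δ₀ := mem_closedBall.1 hx
      have hy2 : dist y w ≤ 2 * δ₀ := mem_closedBall.1 hy
      calc ‖x - y‖ = dist x y := (dist_eq_norm _ _).symm
        _ ≤ dist x w + dist w y := dist_triangle _ _ _
        _ ≤ 2 * δ₀ + 2 * δ₀ := by rw [dist_comm w y]; linarith
        _ = 4 * δ₀ := by ring
    have h4 : ‖x'‖ * ‖x - y‖ ≤ ‖x'‖ * (4 * δ₀) :=
      mul_le_mul_of_nonneg_left h3 (norm_nonneg _)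
    calc u (x - y) ≤ ‖x'‖ * (4 * δ₀) := by linarith
      _ ≤ (⌈‖x'‖ * (4 * δ₀)⌉₊ : ℝ) := Nat.le_ceil _
  -- Baire category on K
  have hKc : IsClosed K := isClosed_closedBall
  haveI : CompleteSpace K := hKc.completeSpace_coe
  haveI : Nonempty K := ⟨⟨w, hwK⟩⟩
  obtain ⟨N, hN⟩ := nonempty_interior_of_iUnion_of_closed
    (f := fun n : ℕ => ((↑) : K → X) ⁻¹' E n)
    (fun n => (hEclosed n).preimage continuous_subtype_val)
    (by
      apply eq_univ_iff_forall.2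
      intro p
      obtain ⟨n, hn⟩ := hcover (p : X) p.2
      exact mem_iUnion.2 ⟨n, hn⟩)
  obtain ⟨z₀, hz₀⟩ := hN
  rw [mem_interior_iff_mem_nhds, Metric.mem_nhds_iff] at hz₀
  obtain ⟨ρ, hρ, hsub0⟩ := hz₀
  set z : X := (z₀ : X) with hzdef
  have hzK : z ∈ K := z₀.2
  have hEN : ∀ x ∈ K, dist x z < ρ → x ∈ E N := by
    intro x hx hd
    have : (⟨x, hx⟩ : K) ∈ Metric.ball z₀ ρ := by
      simp only [mem_ball, Subtype.dist_eq]; exact hd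
    exact hsub0 this
  -- move the ball inward so that it is a genuine ball inside K
  have hzw : ‖z - w‖ ≤ 2 * δ₀ := by
    have := mem_closedBall.1 hzK
    rwa [dist_eq_norm] at this
  set σ : ℝ := min 1 (ρ / (4 * δ₀)) with hσdef
  have hσpos : 0 < σ := lt_min one_pos (by positivity)
  have hσ1 : σ ≤ 1 := min_le_left _ _
  have hσ2 : σ ≤ ρ / (4 * δ₀) := min_le_right _ _
  set z₁ : X := w + (1 - σ) • (z - w) with hz₁def
  set ρ₁ : ℝ := min (2 * σ * δ₀) (ρ / 2) with hρ₁def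
  have hρ₁pos : 0 < ρ₁ := lt_min (by positivity) (by positivity)
  have hρ₁a : ρ₁ ≤ 2 * σ * δ₀ := min_le_left _ _
  have hρ₁b : ρ₁ ≤ ρ / 2 := min_le_right _ _
  have hz₁w : ‖z₁ - w‖ ≤ (1 - σ) * (2 * δ₀) := by
    have : z₁ - w = (1 - σ) • (z - w) := by rw [hz₁def]; abel
    rw [this, norm_smul, Real.norm_eq_abs, abs_of_nonneg (by linarith)]
    exact mul_le_mul_of_nonneg_left hzw (by linarith)
  have hz₁z : ‖z₁ - z‖ ≤ 2 * σ * δ₀ := by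
    have : z₁ - z = -(σ • (z - w)) := by
      rw [hz₁def]
      rw [sub_smul, one_smul]
      abel
    rw [this, norm_neg, norm_smul, Real.norm_eq_abs, abs_of_nonneg (le_of_lt hσpos)]
    calc σ * ‖z - w‖ ≤ σ * (2 * δ₀) := mul_le_mul_of_nonneg_left hzw (le_of_lt hσpos)
      _ = 2 * σ * δ₀ := by ring
  have hσδρ : 2 * σ * δ₀ ≤ ρ / 2 := by
    have : σ * (4 * δ₀) ≤ (ρ / (4 * δ₀)) * (4 * δ₀) :=
      mul_le_mul_of_nonneg_right hσ2 (by positivity)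
    rw [div_mul_cancel₀] at this
    · linarith
    · positivity
  have hball₁ : ∀ x : X, dist x z₁ < ρ₁ → x ∈ E N := by
    intro x hx
    rw [dist_eq_norm] at hx
    have hxK : x ∈ K := by
      rw [hKdef, mem_closedBall, dist_eq_norm]
      calc ‖x - w‖ ≤ ‖x - z₁‖ + ‖z₁ - w‖ := norm_sub_le_norm_sub_add_norm_sub _ _ _
        _ ≤ ρ₁ + (1 - σ) * (2 * δ₀) := by linarith [le_of_lt hx]
        _ ≤ 2 * σ * δ₀ + (1 - σ) * (2 * δ₀) := by linarith
        _ = 2 * δ₀ := by ring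
    refine hEN x hxK ?_
    rw [dist_eq_norm]
    calc ‖x - z‖ ≤ ‖x - z₁‖ + ‖z₁ - z‖ := norm_sub_le_norm_sub_add_norm_sub _ _ _
      _ < ρ₁ + 2 * σ * δ₀ := by linarith
      _ ≤ ρ / 2 + ρ / 2 := by linarith
      _ = ρ := by ring
  -- the second pivot point
  set y₀ : X := w + (w - z₁) with hy₀def
  have hy₀K : y₀ ∈ K := by
    rw [hKdef, mem_closedBall, dist_eq_norm]
    have : y₀ - w = -(z₁ - w) := by rw [hy₀def]; abel
    rw [this, norm_neg]
    calc ‖z₁ - w‖ ≤ (1 - σ) * (2 * δ₀) := hz₁w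
      _ ≤ 2 * δ₀ := by nlinarith
  obtain ⟨y₀', hy₀'⟩ := hKdom hy₀K
  set Φ : ℝ := ‖y₀'‖ * (4 * δ₀) with hΦdef
  have hΦbd : ∀ y ∈ K, ∀ u ∈ B y, u (y₀ - y) ≤ Φ := by
    intro y hy u hu
    have hmon := hmono hy₀' hu
    simp only [ContinuousLinearMap.sub_apply] at hmon
    have h2 : y₀' (y₀ - y) ≤ ‖y₀'‖ * ‖y₀ - y‖ := by
      have := y₀'.le_opNorm (y₀ - y)
      have habs : y₀' (y₀ - y) ≤ ‖y₀' (y₀ - y)‖ := le_abs_self _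
      linarith
    have h3 : ‖y₀ - y‖ ≤ 4 * δ₀ := by
      have hx2 : dist y₀ w ≤ 2 * δ₀ := mem_closedBall.1 hy₀K
      have hy2 : dist y w ≤ 2 * δ₀ := mem_closedBall.1 hy
      calc ‖y₀ - y‖ = dist y₀ y := (dist_eq_norm _ _).symm
        _ ≤ dist y₀ w + dist w y := dist_triangle _ _ _
        _ ≤ 2 * δ₀ + 2 * δ₀ := by rw [dist_comm w y]; linarith
        _ = 4 * δ₀ := by ring
    have h4 : ‖y₀'‖ * ‖y₀ - y‖ ≤ Φ := by
      rw [hΦdef]; exact mul_le_mul_of_nonneg_left h3 (norm_nonneg _)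
    linarith
  -- propagate the bound to a ball around w
  set ρ₂ : ℝ := ρ₁ / 2 with hρ₂def
  have hρ₂pos : 0 < ρ₂ := by positivity
  set C : ℝ := ((N : ℝ) + Φ) / 2 with hCdef
  have hC : ∀ x : X, dist x w < ρ₂ → ∀ y ∈ K, ∀ u ∈ B y, u (x - y) ≤ C := by
    intro x hx y hy u hu
    set p : X := z₁ + (2 : ℝ) • (x - w) with hpdef
    have hpEN : p ∈ E N := by
      apply hball₁
      rw [dist_eq_norm]
      have : p - z₁ = (2 : ℝ) • (x - w) := by rw [hpdef]; abel
      rw [this, norm_smul, Real.norm_eq_abs]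
      rw [dist_eq_norm] at hx
      rw [abs_of_nonneg (by norm_num : (0:ℝ) ≤ 2)]
      rw [hρ₂def] at hx
      linarith
    have hkey : x - y = (2⁻¹ : ℝ) • ((p - y) + (y₀ - y)) := by
      rw [hpdef, hy₀def]
      rw [smul_add, smul_sub, smul_sub, smul_add, smul_add]
      rw [smul_smul]
      norm_num
      module
    have hub : u (p - y) ≤ (N : ℝ) := hpEN.2 y hy u hu
    have hub2 : u (y₀ - y) ≤ Φ := hΦbd y hy u hu
    rw [hkey]
    rw [map_smul]
    rw [map_add]
    rw [smul_eq_mul, hCdef]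
    linarith
  have hCnn : 0 ≤ C := by
    obtain ⟨u, hu⟩ := hKdom hwK
    have := hC w (by simpa using hρ₂pos) w hwK u hu
    simpa using this
  -- conclude
  have hρ₂δ₀ : ρ₂ ≤ δ₀ := by
    have : ρ₁ ≤ 2 * δ₀ := le_trans hρ₁a (by nlinarith)
    rw [hρ₂def]; linarith
  refine ⟨ρ₂ / 2, by positivity, 4 * C / ρ₂, ?_, ?_⟩
  · intro x hx
    apply hdom
    rw [mem_ball] at hx ⊢
    have : δ₀ < r₀ := by rw [hδ₀def]; linarith
    linarith
  · intro x hx b hb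
    rw [mem_ball] at hx
    refine b.opNorm_le_bound (by positivity) ?_
    intro v
    rcases eq_or_ne v 0 with rfl | hv
    · simp
    · have hK2 : ∀ d : X, ‖d‖ < ρ₂ / 2 → b d ≤ C := by
        intro d hd
        have hxK : dist (x + d) w < ρ₂ := by
          calc dist (x + d) w ≤ dist (x + d) x + dist x w := dist_triangle _ _ _
            _ = ‖d‖ + dist x w := by rw [dist_eq_norm]; simp
            _ < ρ₂ / 2 + ρ₂ / 2 := by linarith
            _ = ρ₂ := by ring
        have hxinK : x ∈ K := by
          rw [hKdef, mem_closedBall]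
          have : ρ₂ / 2 ≤ 2 * δ₀ := by linarith
          linarith
        have := hC (x + d) hxK x hxinK b hb
        simpa using this
      obtain ⟨d, hddef⟩ : ∃ d : X, d = (ρ₂ / 4) • ‖v‖⁻¹ • v := ⟨_, rfl⟩
      have hnv : ‖v‖ ≠ 0 := norm_ne_zero_iff.2 hv
      have hρ₂ne : ρ₂ ≠ 0 := ne_of_gt hρ₂pos
      have hdn : ‖d‖ = ρ₂ / 4 := by
        rw [hddef, norm_smul, norm_smul, Real.norm_eq_abs, Real.norm_eq_abs,
          abs_of_nonneg (by positivity : (0:ℝ) ≤ ρ₂/4), abs_of_nonneg (by positivity)]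
        field_simp
      have h1 : b d ≤ C := hK2 d (by rw [hdn]; linarith)
      have h2 : b (-d) ≤ C := hK2 (-d) (by rw [norm_neg, hdn]; linarith)
      rw [map_neg] at h2
      have habs : |b d| ≤ C := abs_le.2 ⟨by linarith, h1⟩
      have hbd : b d = (ρ₂ / 4) * (‖v‖⁻¹ * b v) := by
        rw [hddef, map_smul, map_smul, smul_eq_mul, smul_eq_mul]
      have hbv : b v = (4 / ρ₂ * ‖v‖) * b d := by
        rw [hbd]; field_simp
      rw [Real.norm_eq_abs, hbv, abs_mul]
      rw [abs_of_nonneg (by positivity : (0:ℝ) ≤ 4 / ρ₂ * ‖v‖)]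
      calc 4 / ρ₂ * ‖v‖ * |b d| ≤ 4 / ρ₂ * ‖v‖ * C :=
            mul_le_mul_of_nonneg_left habs (by positivity)
        _ = 4 * C / ρ₂ * ‖v‖ := by ring

/-- If `A` is a maximally monotone linear relation, `B` is maximally monotone
and `w ∈ closure (dom A) ∩ int (dom B)`, then `F_{A + B} (w, w*) ≥ ⟨w, w*⟩` for all `w*`. -/
theorem stmt11 (A B : X → Set (X →L[ℝ] ℝ))
    (hA : IsMaxMonotoneOp A) (hAlin : IsLinearRelationOp A)
    (hB : IsMaxMonotoneOp B)
    (w : X) (hw : w ∈ closure (domOf A) ∩ interior (domOf B)) :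
    ∀ w' : X →L[ℝ] ℝ, ((w' w : ℝ) : EReal) ≤ fitz (opSum A B) (w, w') := by
  intro w'
  by_contra hcon
  rw [not_le] at hcon
  obtain ⟨hwA, hwB⟩ := hw
  obtain ⟨S, hS⟩ := hAlin
  have hwdomB : w ∈ domOf B := interior_subset hwB
  obtain ⟨b₀, hb₀⟩ := hwdomB
  set V : EReal := fitz (opSum A B) (w, w') with hV
  have hmem : ∀ (a : X) (a' b' : X →L[ℝ] ℝ), a' ∈ A a → b' ∈ B a →
      (((a' + b') w + w' a - (a' + b') a : ℝ) : EReal) ≤ V := by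
    intro a a' b' ha hb
    rw [hV]
    simp only [fitz]
    exact le_sSup ⟨(a, a' + b'), ⟨a', ha, b', hb, rfl⟩, rfl⟩
  -- choose a real bound `c` strictly between `V` and `w' w`
  obtain ⟨c', hc1, hc2⟩ := exists_between hcon
  have hcbot : c' ≠ ⊥ := (bot_le.trans_lt hc1).ne'
  have hctop : c' ≠ ⊤ := (hc2.trans (EReal.coe_lt_top _)).ne
  set c : ℝ := c'.toReal with hcdef
  have hcc : (c : EReal) = c' := EReal.coe_toReal hctop hcbot
  have hcw : c < w' w := by
    rw [← EReal.coe_lt_coe_iff, hcc]; exact hc2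
  have hkey : ∀ (a : X) (a' b' : X →L[ℝ] ℝ), a' ∈ A a → b' ∈ B a →
      (a' + b') w + w' a - (a' + b') a ≤ c := by
    intro a a' b' ha hb
    have h := (hmem a a' b' ha hb).trans_lt hc1
    rw [← hcc, EReal.coe_lt_coe_iff] at h
    exact h.le
  set η : ℝ := w' w - c with hηdef
  have hη : 0 < η := by rw [hηdef]; linarith
  -- local boundedness of B near w
  obtain ⟨δ, hδ, M, hballB, hMbd⟩ := monotone_locBdd B hB.1 w hwB
  have hMnn : 0 ≤ M := (norm_nonneg b₀).trans (hMbd w (mem_ball_self hδ) b₀ hb₀)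
  set δ' : ℝ := min δ (η / (2 * (‖w'‖ + M + 1))) with hδ'def
  have hδ'pos : 0 < δ' := lt_min hδ (by positivity)
  -- key estimate on the graph of A near w
  have hH : ∀ a : X, dist a w < δ' → ∀ a' ∈ A a, a' (w - a) ≤ -(η / 2) := by
    intro a ha a' ha'
    have haB : a ∈ ball w δ := mem_ball.2 (ha.trans_le (min_le_left _ _))
    obtain ⟨b', hb'⟩ := hballB haB
    have hMb : ‖b'‖ ≤ M := hMbd a haB b' hb'
    have h1 := hkey a a' b' ha' hb'
    simp only [ContinuousLinearMap.add_apply] at h1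
    have hwa : ‖w - a‖ < δ' := by rw [← dist_eq_norm, dist_comm]; exact ha
    have hb'bd : -(M * ‖w - a‖) ≤ b' (w - a) := by
      have h2 : ‖b' (w - a)‖ ≤ ‖b'‖ * ‖w - a‖ := b'.le_opNorm _
      have h3 : ‖b'‖ * ‖w - a‖ ≤ M * ‖w - a‖ :=
        mul_le_mul_of_nonneg_right hMb (norm_nonneg _)
      have h4 : -(b' (w - a)) ≤ ‖b' (w - a)‖ := neg_le_abs _
      linarith
    have hw'bd : w' w - w' a ≤ ‖w'‖ * ‖w - a‖ := by
      have h2 : ‖w' (w - a)‖ ≤ ‖w'‖ * ‖w - a‖ := w'.le_opNorm _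
      have h4 : w' (w - a) ≤ ‖w' (w - a)‖ := by
        rw [Real.norm_eq_abs]; exact le_abs_self _
      have h5 : w' (w - a) = w' w - w' a := map_sub w' w a
      linarith
    have hδ'bd : (‖w'‖ + M) * δ' ≤ η / 2 := by
      have h5 : δ' ≤ η / (2 * (‖w'‖ + M + 1)) := min_le_right _ _
      have h6 : 0 < 2 * (‖w'‖ + M + 1) := by positivity
      have h7 : (‖w'‖ + M) * δ' ≤ (‖w'‖ + M) * (η / (2 * (‖w'‖ + M + 1)))  :=
        mul_le_mul_of_nonneg_left h5 (by positivity)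
      have h8 : (‖w'‖ + M) * (η / (2 * (‖w'‖ + M + 1))) ≤ η / 2 := by
        rw [← mul_div_assoc, div_le_div_iff₀ h6 two_pos]
        nlinarith [norm_nonneg w', hη.le]
      linarith
    have e1 : a' (w - a) = a' w - a' a := map_sub a' w a
    have e2 : b' (w - a) = b' w - b' a := map_sub b' w a
    have hmul : (‖w'‖ + M) * ‖w - a‖ ≤ (‖w'‖ + M) * δ' :=
      mul_le_mul_of_nonneg_left hwa.le (by positivity)
    -- a'(w-a) ≤ c - w' a - b'(w-a) = -η + (w'w - w'a) - b'(w-a)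
    nlinarith [norm_nonneg (w - a)]
  -- the hypograph of the concave function a ↦ ⟨A a, w - a⟩
  set hypo : Set (X × ℝ) := {p | ∃ a', a' ∈ A p.1 ∧ p.2 ≤ a' (w - p.1)} with hhypodef
  have hconv : Convex ℝ hypo := by
    rintro p ⟨a', ha', hp2⟩ q ⟨b', hb', hq2⟩ θ τ hθ hτ hsum
    have hτeq : τ = 1 - θ := by linarith
    subst hτeq
    refine ⟨θ • a' + (1 - θ) • b', ?_, ?_⟩
    · have h1 : (p.1, a') ∈ (S : Set (X × (X →L[ℝ] ℝ))) := by
        rw [hS]; exact ha'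
      have h2 : (q.1, b') ∈ (S : Set (X × (X →L[ℝ] ℝ))) := by
        rw [hS]; exact hb'
      have h3 := S.add_mem (S.smul_mem θ h1) (S.smul_mem (1 - θ) h2)
      have h4 : ((θ • p.1 + (1 - θ) • q.1, θ • a' + (1 - θ) • b') : X × (X →L[ℝ] ℝ)) ∈
          (S : Set (X × (X →L[ℝ] ℝ))) := h3
      rw [hS] at h4
      exact h4
    · have hmon := hA.1 ha' hb'
      simp only [ContinuousLinearMap.sub_apply] at hmon
      rw [map_sub, map_sub] at hmon
      simp only [Prod.snd_add, Prod.smul_snd, Prod.fst_add, Prod.smul_fst, smul_eq_mul,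
        ContinuousLinearMap.add_apply, ContinuousLinearMap.smul_apply, map_sub, map_add,
        map_smul, smul_eq_mul]
      rw [map_sub] at hp2 hq2
      nlinarith [mul_nonneg hθ hτ, mul_le_mul_of_nonneg_left hp2 hθ,
        mul_le_mul_of_nonneg_left hq2 hτ, mul_nonneg (mul_nonneg hθ hτ) hmon]
  -- (w, 0) is at positive distance from the hypograph
  set κ : ℝ := min δ' (η / 2) with hκdef
  have hκpos : 0 < κ := lt_min hδ'pos (by positivity)
  have hdisj : ((w, (0 : ℝ)) : X × ℝ) ∉ thickening κ hypo := by
    intro hmem'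
    rw [mem_thickening_iff] at hmem'
    obtain ⟨p, ⟨a', ha', hp2⟩, hdist⟩ := hmem'
    rw [Prod.dist_eq, sup_lt_iff] at hdist
    obtain ⟨hd1, hd2⟩ := hdist
    have hain : dist p.1 w < δ' := by
      rw [dist_comm]
      exact hd1.trans_le (min_le_left _ _)
    have hbound := hH p.1 hain a' ha'
    have hp2' : p.2 ≤ -(η / 2) := hp2.trans hbound
    have hd2' : |p.2| < η / 2 := by
      have : dist (0 : ℝ) p.2 = |p.2| := by
        rw [Real.dist_eq, zero_sub, abs_neg]
      rw [this] at hd2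
      exact hd2.trans_le (min_le_right _ _)
    have : η / 2 ≤ |p.2| := le_trans (by linarith) (neg_le_abs p.2)
    linarith
  -- separation
  obtain ⟨Λ, hΛ⟩ := geometric_hahn_banach_open_point (hconv.thickening κ)
    isOpen_thickening hdisj
  set f : X →L[ℝ] ℝ := Λ.comp (ContinuousLinearMap.inl ℝ X ℝ) with hfdef
  set γ : ℝ := Λ ((0 : X), (1 : ℝ)) with hγdef
  have hΛeq : ∀ (a : X) (t : ℝ), Λ (a, t) = f a + t * γ := by
    intro a t
    have hsplit : ((a, t) : X × ℝ) = (a, 0) + t • ((0 : X), (1 : ℝ)) := by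
      simp [Prod.ext_iff]
    rw [hsplit, map_add, map_smul, smul_eq_mul, hγdef, hfdef]
    simp [ContinuousLinearMap.comp_apply]
  have hstrict : ∀ p ∈ hypo, Λ p < f w := by
    intro p hp
    have h := hΛ p (self_subset_thickening hκpos _ hp)
    have hw0 : Λ ((w, (0 : ℝ)) : X × ℝ) = f w := by
      rw [hΛeq]; ring
    rwa [hw0] at h
  -- a base point of dom A near w
  obtain ⟨a₀, ha₀A, ha₀d⟩ : ∃ a₀ ∈ domOf A, dist w a₀ < δ' :=
    Metric.mem_closure_iff.1 hwA δ' hδ'pos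
  obtain ⟨a₀', ha₀'⟩ := ha₀A
  -- γ ≥ 0
  have hγnn : 0 ≤ γ := by
    by_contra hneg
    push_neg at hneg
    set n : ℝ := min (a₀' (w - a₀)) ((f w - f a₀) / γ) with hndef
    have hmemn : ((a₀, n) : X × ℝ) ∈ hypo := ⟨a₀', ha₀', min_le_left _ _⟩
    have h := hstrict _ hmemn
    rw [hΛeq] at h
    have hn2 : n ≤ (f w - f a₀) / γ := min_le_right _ _
    have h3 : f w - f a₀ ≤ n * γ := (le_div_iff_of_neg hneg).1 hn2
    linarith
  -- γ ≠ 0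
  have hγne : γ ≠ 0 := by
    intro h0
    have hflt : ∀ a ∈ domOf A, f a < f w := by
      rintro a ⟨a', ha'⟩
      have h := hstrict (a, a' (w - a)) ⟨a', ha', le_refl _⟩
      rw [hΛeq, h0] at h
      linarith
    have hmemsm : ∀ (a : X), a ∈ domOf A → ∀ r : ℝ, r • a ∈ domOf A := by
      rintro a ⟨a', ha'⟩ r
      have h1 : (a, a') ∈ (S : Set (X × (X →L[ℝ] ℝ))) := by rw [hS]; exact ha'
      have h2 : ((r • a, r • a') : X × (X →L[ℝ] ℝ)) ∈ (S : Set (X × (X →L[ℝ] ℝ))) :=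
        S.smul_mem r h1
      rw [hS] at h2
      exact ⟨r • a', h2⟩
    have hf0 : ∀ a ∈ domOf A, f a = 0 := by
      intro a ha
      have h1 : f a ≤ 0 := by
        by_contra hpos
        push_neg at hpos
        have h := hflt ((((|f w| + 1) / f a)) • a) (hmemsm a ha _)
        rw [map_smul, smul_eq_mul] at h
        rw [div_mul_cancel₀ _ (ne_of_gt hpos)] at h
        have := le_abs_self (f w)
        linarith
      have h2 : f (-a) ≤ 0 := by
        by_contra hpos
        push_neg at hpos
        have hma : -a ∈ domOf A := by
          have := hmemsm a ha (-1)
          rwa [neg_one_smul] at this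
        have h := hflt ((((|f w| + 1) / f (-a))) • (-a)) (hmemsm _ hma _)
        rw [map_smul, smul_eq_mul] at h
        rw [div_mul_cancel₀ _ (ne_of_gt hpos)] at h
        have := le_abs_self (f w)
        linarith
      rw [map_neg] at h2
      linarith
    have hfw : f w = 0 := by
      have h := map_mem_closure f.continuous hwA
        (fun a ha => mem_singleton_iff.2 (hf0 a ha))
      simpa using h
    have h := hflt a₀ ⟨a₀', ha₀'⟩
    rw [hfw, hf0 a₀ ⟨a₀', ha₀'⟩] at h
    exact lt_irrefl 0 h
  have hγpos : 0 < γ := hγnn.lt_of_ne (Ne.symm hγne)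
  -- the candidate functional
  set v : X →L[ℝ] ℝ := γ⁻¹ • f with hvdef
  have hrel : ∀ (a : X) (a' : X →L[ℝ] ℝ), a' ∈ A a → 0 ≤ (v - a') (w - a) := by
    intro a a' ha'
    have h := hstrict (a, a' (w - a)) ⟨a', ha', le_refl _⟩
    rw [hΛeq] at h
    have h2 : a' (w - a) * γ < f w - f a := by linarith
    have h3 : a' (w - a) < (f w - f a) / γ := (lt_div_iff₀ hγpos).2 h2
    have h4 : (v - a') (w - a) = γ⁻¹ * (f w - f a) - a' (w - a) := by
      rw [hvdef]
      simp only [ContinuousLinearMap.sub_apply, ContinuousLinearMap.smul_apply,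
        smul_eq_mul, map_sub]
      ring
    rw [h4, inv_mul_eq_div]
    linarith
  -- maximality of A forces v ∈ A w
  have hvAw : v ∈ A w := by
    set A' : X → Set (X →L[ℝ] ℝ) := fun x => A x ∪ {u | x = w ∧ u = v} with hA'def
    have hmonoA' : IsMonotoneOp A' := by
      intro x y x' y' hx hy
      rcases hx with hx | hx <;> rcases hy with hy | hy
      · exact hA.1 hx hy
      · obtain ⟨hy1, hy2⟩ := hy
        rw [hy1, hy2]
        have h := hrel x x' hx
        have he : (x' - v) (x - w) = (v - x') (w - x) := by
          simp only [ContinuousLinearMap.sub_apply, map_sub]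
          ring
        rw [he]
        exact h
      · obtain ⟨hx1, hx2⟩ := hx
        rw [hx1, hx2]
        exact hrel y y' hy
      · obtain ⟨hx1, hx2⟩ := hx
        obtain ⟨hy1, hy2⟩ := hy
        rw [hx1, hx2, hy1, hy2]
        simp
    have heq := hA.2 A' hmonoA' (fun p hp => Or.inl hp)
    have hmem' : ((w, v) : X × (X →L[ℝ] ℝ)) ∈ graphOf A' := Or.inr ⟨rfl, rfl⟩
    rw [heq] at hmem'
    exact hmem'
  -- contradiction: the exact value w' w is attained
  have hfin : ((w' w : ℝ) : EReal) ≤ V := by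
    rw [hV]
    simp only [fitz]
    refine le_sSup ⟨((w, v + b₀) : X × (X →L[ℝ] ℝ)), ⟨v, hvAw, b₀, hb₀, rfl⟩, ?_⟩
    exact congrArg (fun r : ℝ => (r : EReal)) (by ring)
  exact absurd hfin (not_le.2 hcon)
end

section
/- Let X be a real Banach space, let A : X ⇉ X* be a monotone linear relation, and let B : X ⇉ X* be a monotone operator with (0, 0) ∈ gra A ∩ gra B. If (z, z*) ∈ X × X* satisfies F_{A+B}(z, z*) < ⟨z, z*⟩, where F_{A+B} is the Fitzpatrick function of A + B, then ⟨z, a*⟩ = 0 for every a* ∈ A0, i.e., z belongs to the pre-annihilator (A0)^⊥ of the set A0 := {a* ∈ X* : (0, a*) ∈ gra A}. -/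
open Set Pointwise

variable {X : Type*} [NormedAddCommGroup X] [NormedSpace ℝ X] [CompleteSpace X]

/-- If `A` is a monotone linear relation, `B` is monotone,
`(0, 0) ∈ gra A ∩ gra B`, and `F_{A + B} (z, z*) < ⟨z, z*⟩`, then `⟨z, a*⟩ = 0` for every
`a* ∈ A 0`, i.e. `z` lies in the pre-annihilator of `A 0`. -/
theorem stmt12 (A B : X → Set (X →L[ℝ] ℝ))
    (hAmono : IsMonotoneOp A) (hAlin : IsLinearRelationOp A)
    (hBmono : IsMonotoneOp B)
    (h0A : (0 : X →L[ℝ] ℝ) ∈ A 0) (h0B : (0 : X →L[ℝ] ℝ) ∈ B 0)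
    (z : X) (z' : X →L[ℝ] ℝ)
    (hlt : fitz (opSum A B) (z, z') < ((z' z : ℝ) : EReal)) :
    ∀ a' ∈ A 0, a' z = 0 := by
  intro a' ha'
  obtain ⟨S, hS⟩ := hAlin
  have key : ∀ t : ℝ, ((t * a' z : ℝ) : EReal) ≤ fitz (opSum A B) (z, z') := by
    intro t
    have h1 : ((0 : X), a') ∈ S := by
      rw [← SetLike.mem_coe, hS]; exact ha'
    have h2 : ((0 : X), t • a') ∈ graphOf A := by
      rw [← hS]
      have := S.smul_mem t h1
      simpa [Prod.smul_mk] using this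
    have h3 : ((0 : X), t • a') ∈ graphOf (opSum A B) :=
      ⟨t • a', h2, 0, h0B, by simp⟩
    have hmem : (((t • a') z + z' 0 - (t • a') 0 : ℝ) : EReal) ∈
        ((fun q : X × (X →L[ℝ] ℝ) =>
          ((q.2 z + z' q.1 - q.2 q.1 : ℝ) : EReal)) '' graphOf (opSum A B)) :=
      ⟨((0 : X), t • a'), h3, rfl⟩
    have := le_sSup hmem
    simpa [fitz, mul_comm] using this
  by_contra h
  have ht := key ((z' z + 1) / (a' z))
  rw [div_mul_cancel₀ _ h] at ht
  have := lt_of_le_of_lt ht hlt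
  rw [EReal.coe_lt_coe_iff] at this
  linarith
end
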